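/- In the uniform case with two thresholds, the asymptotic winning probability of the (x₂N, x₁N)-strategy equals x₂·ln(x₁/x₂) + x₂·∫_{x₁}^{1} (1/t₁) ∫_{x₁}^{t₁} (1/t₂) dt₂ dt₁ + x₁·ln(1/x₁), which simplifies to x₂·ln(x₁/x₂) + (x₂/2)·(ln(1/x₁))² + x₁·ln(1/x₁); maximizing over 0 < x₂ ≤ x₁ ≤ 1 gives x₁ = 1/e, x₂ = e^{−3/2}, and optimal probability e^{−1} + e^{−3/2}. -/

import Mathlib

open Real intervalIntegral

-- inner integral
lemma inner_eval {x₁ t : ℝ} (hx : 0 < x₁) (ht : 0 < t) :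
    ∫ t₂ in x₁..t, (1 / t₂ : ℝ) = Real.log t - Real.log x₁ := by
  rw [integral_one_div, Real.log_div ht.ne' hx.ne']
  intro h
  rcases Set.mem_uIcc.1 h with ⟨h1, _⟩ | ⟨h2, _⟩
  · linarith
  · linarith

lemma main_integral {x₁ : ℝ} (hx : 0 < x₁) (hx1 : x₁ ≤ 1) :
    (∫ t₁ in x₁..(1 : ℝ), (1 / t₁) * ∫ t₂ in x₁..t₁, (1 / t₂)) = (Real.log x₁) ^ 2 / 2 := by
  have hset : Set.uIcc x₁ (1 : ℝ) = Set.Icc x₁ 1 := Set.uIcc_of_le hx1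
  have hpos : ∀ t ∈ Set.uIcc x₁ (1 : ℝ), 0 < t := by
    intro t ht
    rw [hset] at ht
    exact lt_of_lt_of_le hx ht.1
  have hcongr : Set.EqOn (fun t => (1 / t) * ∫ t₂ in x₁..t, (1 / t₂ : ℝ))
      (fun t => (1 / t) * (Real.log t - Real.log x₁)) (Set.uIcc x₁ 1) := by
    intro t ht
    simp only [inner_eval hx (hpos t ht)]
  rw [intervalIntegral.integral_congr hcongr]
  have key : ∀ t ∈ Set.uIcc x₁ (1 : ℝ),
      HasDerivAt (fun t => (Real.log t) ^ 2 / 2 - Real.log x₁ * Real.log t)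
        ((1 / t) * (Real.log t - Real.log x₁)) t := by
    intro t ht
    have htne : t ≠ 0 := (hpos t ht).ne'
    have h1 := ((Real.hasDerivAt_log htne).pow 2).div_const 2
    have h2 := (Real.hasDerivAt_log htne).const_mul (Real.log x₁)
    refine (h1.sub h2).congr_deriv ?_
    field_simp
    ring
  have hint : IntervalIntegrable (fun t => (1 / t) * (Real.log t - Real.log x₁))
      MeasureTheory.volume x₁ 1 := by
    apply ContinuousOn.intervalIntegrable
    apply ContinuousOn.mul
    · exact continuousOn_const.div continuousOn_id fun t ht => (hpos t ht).ne'
    · exact (Real.continuousOn_log.mono fun t ht => (hpos t ht).ne').sub continuousOn_const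
  rw [intervalIntegral.integral_eq_sub_of_hasDerivAt key hint]
  simp [Real.log_one]
  ring

-- key lemma: exp b * (c - b) ≤ exp (c - 1)
lemma expb_mul_le (b c : ℝ) : Real.exp b * (c - b) ≤ Real.exp (c - 1) := by
  have h := Real.add_one_le_exp (c - 1 - b)
  have hb := Real.exp_pos b
  have hmul : Real.exp (c - 1 - b) * Real.exp b = Real.exp (c - 1) := by
    rw [← Real.exp_add]; ring_nf
  nlinarith [Real.exp_pos (c - 1 - b)]

lemma phi_deriv (a : ℝ) :
    HasDerivAt (fun a => Real.exp (a + a ^ 2 / 2 - 1) - a * Real.exp a)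
      ((1 + a) * (Real.exp (a + a ^ 2 / 2 - 1) - Real.exp a)) a := by
  have h1 : HasDerivAt (fun a : ℝ => a + a ^ 2 / 2 - 1) (1 + a) a := by
    have := ((hasDerivAt_id a).add ((hasDerivAt_pow 2 a).div_const 2)).sub_const 1
    exact this.congr_deriv (by simp)
  have h2 := h1.exp
  have h3 : HasDerivAt (fun a : ℝ => a * Real.exp a) (Real.exp a + a * Real.exp a) a := by
    have := (hasDerivAt_id a).mul (Real.hasDerivAt_exp a)
    exact this.congr_deriv (by simp)
  refine (h2.sub h3).congr_deriv ?_
  ring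

lemma phi_cont : Continuous (fun a : ℝ => Real.exp (a + a ^ 2 / 2 - 1) - a * Real.exp a) := by
  continuity

lemma phi_bound {a : ℝ} (h1 : -Real.sqrt 2 ≤ a) (h2 : a ≤ 0) :
    Real.exp (a + a ^ 2 / 2 - 1) - a * Real.exp a ≤ Real.exp (-1) + Real.exp (-(3 / 2)) := by
  set φ := fun a : ℝ => Real.exp (a + a ^ 2 / 2 - 1) - a * Real.exp a with hφ
  have hderiv : ∀ t : ℝ, deriv φ t = (1 + t) * (Real.exp (t + t ^ 2 / 2 - 1) - Real.exp t) :=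
    fun t => (phi_deriv t).deriv
  have hsqrt : Real.sqrt 2 ^ 2 = 2 := Real.sq_sqrt (by norm_num)
  have hs1 : (1 : ℝ) ≤ Real.sqrt 2 := by nlinarith [Real.sqrt_nonneg 2]
  have hphi1 : φ (-1) = Real.exp (-1) + Real.exp (-(3 / 2)) := by
    simp only [hφ]
    norm_num
    ring
  have hdiff : ∀ s : Set ℝ, DifferentiableOn ℝ φ s :=
    fun s t _ => (phi_deriv t).differentiableAt.differentiableWithinAt
  rcases le_total a (-1) with hc | hc
  · -- monotone on Icc (-√2) (-1)
    have hmono : MonotoneOn φ (Set.Icc (-Real.sqrt 2) (-1)) := by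
      apply monotoneOn_of_deriv_nonneg (convex_Icc _ _) phi_cont.continuousOn (hdiff _)
      intro t ht
      rw [interior_Icc, Set.mem_Ioo] at ht
      rw [hderiv]
      have ht1 : 1 + t ≤ 0 := by linarith [ht.2]
      have ht2 : Real.exp (t + t ^ 2 / 2 - 1) - Real.exp t ≤ 0 := by
        have : t + t ^ 2 / 2 - 1 ≤ t := by nlinarith [ht.1, ht.2, Real.sqrt_nonneg 2]
        have := Real.exp_le_exp.2 this
        linarith
      nlinarith [ht1, ht2]
    have h5 := hmono (Set.mem_Icc.2 ⟨h1, hc⟩) (Set.mem_Icc.2 ⟨by linarith, le_refl _⟩) hc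
    rw [hphi1] at h5
    simpa only [hφ] using h5
  · -- antitone on Icc (-1) 0
    have hanti : AntitoneOn φ (Set.Icc (-1 : ℝ) 0) := by
      apply antitoneOn_of_deriv_nonpos (convex_Icc _ _) phi_cont.continuousOn (hdiff _)
      intro t ht
      rw [interior_Icc, Set.mem_Ioo] at ht
      rw [hderiv]
      have ht1 : 0 ≤ 1 + t := by linarith [ht.1]
      have ht2 : Real.exp (t + t ^ 2 / 2 - 1) - Real.exp t ≤ 0 := by
        have : t + t ^ 2 / 2 - 1 ≤ t := by nlinarith [ht.1, ht.2]
        have := Real.exp_le_exp.2 this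
        linarith
      exact mul_nonpos_of_nonneg_of_nonpos ht1 ht2
    have h5 := hanti (Set.mem_Icc.2 ⟨le_refl _, by norm_num⟩) (Set.mem_Icc.2 ⟨hc, h2⟩) hc
    rw [hphi1] at h5
    simpa only [hφ] using h5

lemma psi_bound {a : ℝ} (h : a ≤ -Real.sqrt 2) :
    Real.exp a * (a ^ 2 / 2 - a) ≤ Real.exp (-1) + Real.exp (-(3 / 2)) := by
  set ψ := fun a : ℝ => Real.exp a * (a ^ 2 / 2 - a) with hψ
  have hsqrt : Real.sqrt 2 ^ 2 = 2 := Real.sq_sqrt (by norm_num)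
  have hs1 : (1 : ℝ) ≤ Real.sqrt 2 := by nlinarith [Real.sqrt_nonneg 2]
  have hd : ∀ t : ℝ, HasDerivAt ψ (Real.exp t * (t ^ 2 / 2 - 1)) t := by
    intro t
    have h1 : HasDerivAt (fun t : ℝ => t ^ 2 / 2 - t) (t - 1) t := by
      have := ((hasDerivAt_pow 2 t).div_const 2).sub (hasDerivAt_id t)
      exact this.congr_deriv (by simp)
    have := (Real.hasDerivAt_exp t).mul h1
    refine this.congr_deriv ?_
    ring
  have hmono : MonotoneOn ψ (Set.Iic (-Real.sqrt 2)) := by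
    apply monotoneOn_of_deriv_nonneg (convex_Iic _)
    · exact (Real.continuous_exp.mul (by continuity)).continuousOn
    · exact fun t _ => (hd t).differentiableAt.differentiableWithinAt
    · intro t ht
      rw [interior_Iic, Set.mem_Iio] at ht
      rw [(hd t).deriv]
      have : 2 ≤ t ^ 2 := by nlinarith [Real.sqrt_nonneg 2]
      have := Real.exp_pos t
      nlinarith
  have h2 := hmono (Set.mem_Iic.2 h) (Set.mem_Iic.2 le_rfl) h
  have heq : ψ (-Real.sqrt 2) =
      Real.exp (-Real.sqrt 2 + (-Real.sqrt 2) ^ 2 / 2 - 1) -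
        (-Real.sqrt 2) * Real.exp (-Real.sqrt 2) := by
    have hexp : Real.exp (-Real.sqrt 2 + (-Real.sqrt 2) ^ 2 / 2 - 1) = Real.exp (-Real.sqrt 2) := by
      congr 1
      rw [neg_sq, hsqrt]
      ring
    rw [hexp]
    simp only [hψ, neg_sq, hsqrt]
    ring
  have h3 := phi_bound (le_refl (-Real.sqrt 2)) (by linarith : -Real.sqrt 2 ≤ 0)
  rw [heq] at h2
  simp only [hψ] at h2
  linarith [h2, h3]

theorem stmt15 :
    (∀ x₁ x₂ : ℝ, 0 < x₂ → x₂ ≤ x₁ → x₁ ≤ 1 →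
      x₂ * Real.log (x₁ / x₂) +
          x₂ * (∫ t₁ in x₁..(1 : ℝ), (1 / t₁) * ∫ t₂ in x₁..t₁, (1 / t₂)) +
          x₁ * Real.log (1 / x₁) =
        x₂ * Real.log (x₁ / x₂) + (x₂ / 2) * (Real.log (1 / x₁)) ^ 2 +
          x₁ * Real.log (1 / x₁)) ∧
    (∀ x₁ x₂ : ℝ, 0 < x₂ → x₂ ≤ x₁ → x₁ ≤ 1 →
      x₂ * Real.log (x₁ / x₂) + (x₂ / 2) * (Real.log (1 / x₁)) ^ 2 +
          x₁ * Real.log (1 / x₁) ≤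
        Real.exp (-1) + Real.exp (-(3 / 2))) ∧
    (Real.exp (-(3 / 2)) * Real.log (Real.exp (-1) / Real.exp (-(3 / 2))) +
        (Real.exp (-(3 / 2)) / 2) * (Real.log (1 / Real.exp (-1))) ^ 2 +
        Real.exp (-1) * Real.log (1 / Real.exp (-1)) =
      Real.exp (-1) + Real.exp (-(3 / 2))) := by
  refine ⟨?_, ?_, ?_⟩
  · intro x₁ x₂ hx2 h21 h11
    have hx1 : 0 < x₁ := lt_of_lt_of_le hx2 h21
    rw [main_integral hx1 h11, one_div x₁, Real.log_inv]
    ring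
  · intro x₁ x₂ hx2 h21 h11
    have hx1 : 0 < x₁ := lt_of_lt_of_le hx2 h21
    set a := Real.log x₁ with ha
    set b := Real.log x₂ with hb
    have hba : b ≤ a := Real.log_le_log hx2 h21
    have ha0 : a ≤ 0 := Real.log_nonpos hx1.le h11
    have hx1e : x₁ = Real.exp a := (Real.exp_log hx1).symm
    have hx2e : x₂ = Real.exp b := (Real.exp_log hx2).symm
    rw [Real.log_div hx1.ne' hx2.ne', one_div x₁, Real.log_inv]
    rw [hx1e, hx2e]
    simp only [Real.log_exp]
    -- goal: exp b * (a - b) + exp b / 2 * (-a)^2 + exp a * (-a) ≤ ...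
    have hsqrt : Real.sqrt 2 ^ 2 = 2 := Real.sq_sqrt (by norm_num)
    rcases le_total (a ^ 2) 2 with hc | hc
    · have hA : -Real.sqrt 2 ≤ a := by nlinarith [Real.sqrt_nonneg 2]
      have hK := expb_mul_le b (a + a ^ 2 / 2)
      have hφ := phi_bound hA ha0
      nlinarith [hK, hφ]
    · have hB : a ≤ -Real.sqrt 2 := by nlinarith [Real.sqrt_nonneg 2]
      -- exp b * (a + a²/2 - b) ≤ exp a * (a²/2)
      have hstep : Real.exp b * (a + a ^ 2 / 2 - b) ≤ Real.exp a * (a ^ 2 / 2) := by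
        have h1 := Real.add_one_le_exp (a - b)
        have h2 : Real.exp a = Real.exp b * Real.exp (a - b) := by
          rw [← Real.exp_add]; ring_nf
        have hd1 : (1 : ℝ) ≤ a ^ 2 / 2 := by linarith
        have hebp := Real.exp_pos b
        nlinarith [Real.exp_pos (a - b)]
      have hψ := psi_bound hB
      nlinarith [hstep, hψ]
  · have h1 : Real.log (Real.exp (-1) / Real.exp (-(3 / 2))) = 1 / 2 := by
      rw [← Real.exp_sub, Real.log_exp]; norm_num
    have h2 : Real.log (1 / Real.exp (-1)) = 1 := by
      rw [one_div, ← Real.exp_neg, Real.log_exp]; norm_num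
    rw [h1, h2]
    ring
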